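/- Explicit first consistency measure: let P : V → S be the linear map determined by b(P v, σ) = ⟪v, E σ⟫, assume b(u, σ) = ⟪u, E σ⟫ for all u ∈ S ∩ V, σ ∈ S, assume V is not contained in S, and let Π_S be the orthogonal projection of X onto S. Then the smallest constant δ_V with ‖Π_S v − P v‖ ≤ δ_V ‖v − Π_S v‖ for all v ∈ V exists, is finite, equals sup over v ∈ V with Π_S v ≠ v and σ ∈ S, σ ≠ 0, of (b(Π_S v, σ) − ⟪v, E σ⟫) / (‖Π_S v − v‖ · ‖b(·,σ)‖_{S'}), and the quasi-optimality constant satisfies Cqopt = √(1 + δ_V²). -/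

import Mathlib

open scoped RealInnerProductSpace

set_option maxHeartbeats 1000000
set_option synthInstance.maxHeartbeats 400000


/-- If `W'` is a closed subspace meeting the finite-dimensional subspace `S ≠ ⊥` only in `0`,
then points of `W'` are uniformly far from `S`. -/
lemma auxLow {X : Type*} [NormedAddCommGroup X] [NormedSpace ℝ X]
    (S W' : Submodule ℝ X) [FiniteDimensional ℝ S] (hSne : S ≠ ⊥)
    (hW : IsClosed (W' : Set X)) (hd : ∀ x ∈ W', x ∈ S → x = (0 : X)) :
    ∃ c > 0, ∀ x ∈ W', ∀ s ∈ S, c * ‖x‖ ≤ ‖x - s‖ := by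
  -- minimum of distance to W' over the unit sphere of S
  obtain ⟨s₀, hs₀S, hs₀⟩ := Submodule.exists_mem_ne_zero_of_ne_bot hSne
  have hsphne : (Metric.sphere (0 : S) 1).Nonempty := by
    refine ⟨‖s₀‖⁻¹ • ⟨s₀, hs₀S⟩, ?_⟩
    have : ‖(⟨s₀, hs₀S⟩ : S)‖ ≠ 0 := by simpa using hs₀
    have h2 : ‖(⟨s₀, hs₀S⟩ : S)‖ = ‖s₀‖ := rfl
    rw [h2] at this
    simp [norm_smul, h2, inv_mul_cancel₀ this]
  have hcont : ContinuousOn (fun σ : S => Metric.infDist (σ : X) (W' : Set X))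
      (Metric.sphere (0 : S) 1) :=
    ((Metric.continuous_infDist_pt (W' : Set X)).comp continuous_subtype_val).continuousOn
  obtain ⟨σ₀, hσ₀mem, hσ₀min⟩ := (isCompact_sphere (0 : S) 1).exists_isMinOn hsphne hcont
  set m : ℝ := Metric.infDist (σ₀ : X) (W' : Set X) with hm
  have hWne : (W' : Set X).Nonempty := ⟨0, W'.zero_mem⟩
  have hmpos : 0 < m := by
    rcases lt_or_eq_of_le (Metric.infDist_nonneg (x := (σ₀ : X)) (s := (W' : Set X))) with h | h
    · exact h
    · exfalso
      have : (σ₀ : X) ∈ closure (W' : Set X) :=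
        (Metric.mem_closure_iff_infDist_zero hWne).2 h.symm
      rw [hW.closure_eq] at this
      have : (σ₀ : X) = 0 := hd _ this σ₀.2
      have : σ₀ = 0 := by exact_mod_cast Subtype.ext this
      have := Metric.mem_sphere.1 hσ₀mem
      rw [this] at *
      simp_all
  refine ⟨min (1/2) (m/2), by positivity, ?_⟩
  intro x hx s hs
  rcases eq_or_ne x 0 with rfl | hx0
  · simp
  have hxpos : 0 < ‖x‖ := norm_pos_iff.2 hx0
  rcases le_or_gt ‖s‖ (‖x‖ / 2) with hcase | hcase
  · have h1 : ‖x‖ - ‖s‖ ≤ ‖x - s‖ := by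
      have := norm_sub_norm_le x s
      linarith [le_abs_self (‖x‖ - ‖s‖)]
    have : min (1/2) (m/2) * ‖x‖ ≤ (1/2) * ‖x‖ := by
      apply mul_le_mul_of_nonneg_right (min_le_left _ _) hxpos.le
    linarith
  · have hs0 : s ≠ 0 := by
      intro h; rw [h, norm_zero] at hcase; linarith
    have hsnorm : 0 < ‖s‖ := norm_pos_iff.2 hs0
    set σ : S := ‖s‖⁻¹ • ⟨s, hs⟩ with hσ
    have hσmem : σ ∈ Metric.sphere (0 : S) 1 := by
      have : ‖(⟨s, hs⟩ : S)‖ = ‖s‖ := rfl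
      simp [hσ, norm_smul, this, inv_mul_cancel₀ hsnorm.ne']
    have hmin : m ≤ Metric.infDist (σ : X) (W' : Set X) := hσ₀min hσmem
    have hdistle : Metric.infDist (σ : X) (W' : Set X) ≤ dist (σ : X) (‖s‖⁻¹ • x) := by
      apply Metric.infDist_le_dist_of_mem
      exact W'.smul_mem _ hx
    have hrw : dist (σ : X) (‖s‖⁻¹ • x) = ‖s‖⁻¹ * ‖x - s‖ := by
      have : (σ : X) = ‖s‖⁻¹ • s := rfl
      rw [this, dist_eq_norm, ← smul_sub, norm_smul, norm_sub_rev]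
      simp [abs_of_pos (inv_pos.2 hsnorm)]
    have h1 : m * ‖s‖ ≤ ‖x - s‖ := by
      have := hmin.trans (hdistle.trans_eq hrw)
      rw [← le_div_iff₀ hsnorm] at *
      calc m ≤ ‖s‖⁻¹ * ‖x - s‖ := this
        _ = ‖x - s‖ / ‖s‖ := by rw [inv_mul_eq_div]
      
    have h2 : m * (‖x‖ / 2) ≤ m * ‖s‖ := by
      apply mul_le_mul_of_nonneg_left hcase.le hmpos.le
    have : min (1/2) (m/2) * ‖x‖ ≤ (m/2) * ‖x‖ :=
      mul_le_mul_of_nonneg_right (min_le_right _ _) hxpos.le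
    nlinarith


section auxN
variable {G : Type*} [NormedAddCommGroup G] [InnerProductSpace ℝ G] [FiniteDimensional ℝ G]

lemma auxN_bdd (b : G →ₗ[ℝ] G →ₗ[ℝ] ℝ) (σ : G) :
    BddAbove {c : ℝ | ∃ s : G, ‖s‖ = 1 ∧ c = b s σ} := by
  have : {c : ℝ | ∃ s : G, ‖s‖ = 1 ∧ c = b s σ} =
      (fun s : G => b s σ) '' (Metric.sphere (0 : G) 1) := by
    ext c; constructor
    · rintro ⟨s, hs, rfl⟩; exact ⟨s, by simpa using hs, rfl⟩
    · rintro ⟨s, hs, rfl⟩; exact ⟨s, by simpa using hs, rfl⟩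
  rw [this]
  exact ((isCompact_sphere (0:G) 1).image (b.flip σ).continuous_of_finiteDimensional).bddAbove

lemma auxN_le (b : G →ₗ[ℝ] G →ₗ[ℝ] ℝ) (σ w : G) :
    b w σ ≤ ‖w‖ * sSup {c : ℝ | ∃ s : G, ‖s‖ = 1 ∧ c = b s σ} := by
  rcases eq_or_ne w 0 with rfl | hw
  · simp
  · have hwn : 0 < ‖w‖ := norm_pos_iff.2 hw
    have hmem : b (‖w‖⁻¹ • w) σ ∈ {c : ℝ | ∃ s : G, ‖s‖ = 1 ∧ c = b s σ} :=
      ⟨‖w‖⁻¹ • w, by simp [norm_smul, inv_mul_cancel₀ hwn.ne'], rfl⟩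
    have h1 := le_csSup (auxN_bdd b σ) hmem
    have h2 : b (‖w‖⁻¹ • w) σ = ‖w‖⁻¹ * b w σ := by
      simp [map_smul]
    rw [h2] at h1
    calc b w σ = ‖w‖ * (‖w‖⁻¹ * b w σ) := by field_simp
      _ ≤ ‖w‖ * sSup {c : ℝ | ∃ s : G, ‖s‖ = 1 ∧ c = b s σ} :=
        mul_le_mul_of_nonneg_left h1 hwn.le

lemma aux_flip_surj (b : G →ₗ[ℝ] G →ₗ[ℝ] ℝ) (hb : ∀ s : G, (∀ σ : G, b s σ = 0) → s = 0) :
    Function.Surjective (b.flip : G →ₗ[ℝ] Module.Dual ℝ G) := by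
  -- b is injective, hence surjective onto the dual, hence flip is injective, hence surjective
  have hbinj : Function.Injective (b : G →ₗ[ℝ] Module.Dual ℝ G) := by
    intro s t h
    have : s - t = 0 := hb _ (fun σ => by
      have := congrArg (fun f => f σ) h
      simp [map_sub, this])
    exact sub_eq_zero.1 this
  have hbsurj : Function.Surjective (b : G →ₗ[ℝ] Module.Dual ℝ G) :=
    (LinearMap.injective_iff_surjective_of_finrank_eq_finrank
      (Subspace.dual_finrank_eq (K := ℝ) (V := G)).symm).1 hbinj
  have hflipinj : Function.Injective (b.flip : G →ₗ[ℝ] Module.Dual ℝ G) := by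
    intro σ τ h
    have hz : ∀ s : G, b s (σ - τ) = 0 := fun s => by
      have := congrArg (fun f => f s) h
      simp only [LinearMap.flip_apply] at this
      simp [map_sub, this]
    have : ∀ φ : Module.Dual ℝ G, φ (σ - τ) = 0 := by
      intro φ
      obtain ⟨s, rfl⟩ := hbsurj φ
      exact hz s
    have := (Module.forall_dual_apply_eq_zero_iff ℝ (σ - τ)).1 this
    exact sub_eq_zero.1 this
  exact (LinearMap.injective_iff_surjective_of_finrank_eq_finrank
      (Subspace.dual_finrank_eq (K := ℝ) (V := G)).symm).1 hflipinj

lemma auxN_inner (b : G →ₗ[ℝ] G →ₗ[ℝ] ℝ) (w σ : G) (hw : w ≠ 0)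
    (hσ : ∀ s : G, b s σ = ⟪w, s⟫) :
    sSup {c : ℝ | ∃ s : G, ‖s‖ = 1 ∧ c = b s σ} = ‖w‖ := by
  have hwn : 0 < ‖w‖ := norm_pos_iff.2 hw
  apply le_antisymm
  · apply Real.sSup_le _ hwn.le
    rintro c ⟨s, hs, rfl⟩
    calc b s σ = ⟪w, s⟫ := hσ s
      _ ≤ ‖w‖ * ‖s‖ := real_inner_le_norm w s
      _ = ‖w‖ := by rw [hs, mul_one]
  · apply le_csSup (auxN_bdd b σ)
    refine ⟨‖w‖⁻¹ • w, by simp [norm_smul, inv_mul_cancel₀ hwn.ne'], ?_⟩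
    rw [hσ, real_inner_smul_right, real_inner_self_eq_norm_sq]
    field_simp

lemma auxN_pos (b : G →ₗ[ℝ] G →ₗ[ℝ] ℝ) (hb : ∀ s : G, (∀ σ : G, b s σ = 0) → s = 0)
    (σ : G) (hσ : σ ≠ 0) :
    0 < sSup {c : ℝ | ∃ s : G, ‖s‖ = 1 ∧ c = b s σ} := by
  -- there is s with b s σ ≠ 0
  have : ∃ s : G, b s σ ≠ 0 := by
    by_contra h
    push_neg at h
    -- then for every functional φ = b.flip τ ... use injectivity route: σ = 0
    have hbinj : Function.Injective (b : G →ₗ[ℝ] Module.Dual ℝ G) := by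
      intro s t hst
      have : s - t = 0 := hb _ (fun τ => by
        have := congrArg (fun f => f τ) hst
        simp [map_sub, this])
      exact sub_eq_zero.1 this
    have hbsurj : Function.Surjective (b : G →ₗ[ℝ] Module.Dual ℝ G) :=
      (LinearMap.injective_iff_surjective_of_finrank_eq_finrank
        (Subspace.dual_finrank_eq (K := ℝ) (V := G)).symm).1 hbinj
    have : ∀ φ : Module.Dual ℝ G, φ σ = 0 := by
      intro φ; obtain ⟨s, rfl⟩ := hbsurj φ; exact h s
    exact hσ ((Module.forall_dual_apply_eq_zero_iff ℝ σ).1 this)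
  obtain ⟨s, hs⟩ := this
  have hs0 : s ≠ 0 := fun h => hs (by simp [h])
  have hsn : 0 < ‖s‖ := norm_pos_iff.2 hs0
  -- choose sign so that value is positive
  rcases lt_or_gt_of_ne hs with hneg | hpos
  · have hmem : b (‖s‖⁻¹ • (-s)) σ ∈ {c : ℝ | ∃ u : G, ‖u‖ = 1 ∧ c = b u σ} :=
      ⟨_, by simp [norm_smul, inv_mul_cancel₀ hsn.ne'], rfl⟩
    have hval : 0 < b (‖s‖⁻¹ • (-s)) σ := by
      simp only [map_smul, map_neg, LinearMap.smul_apply, LinearMap.neg_apply]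
      have : 0 < -b s σ := by linarith
      positivity
    exact hval.trans_le (le_csSup (auxN_bdd b σ) hmem)
  · have hmem : b (‖s‖⁻¹ • s) σ ∈ {c : ℝ | ∃ u : G, ‖u‖ = 1 ∧ c = b u σ} :=
      ⟨_, by simp [norm_smul, inv_mul_cancel₀ hsn.ne'], rfl⟩
    have hval : 0 < b (‖s‖⁻¹ • s) σ := by
      simp only [map_smul, LinearMap.smul_apply]
      positivity
    exact hval.trans_le (le_csSup (auxN_bdd b σ) hmem)

end auxN


lemma auxPbound {X : Type*} [NormedAddCommGroup X] [InnerProductSpace ℝ X]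
    (V S : Submodule ℝ X) [FiniteDimensional ℝ S] (hSne : S ≠ ⊥)
    (b : S →ₗ[ℝ] S →ₗ[ℝ] ℝ) (hb : ∀ s : S, (∀ σ : S, b s σ = 0) → s = 0)
    (E : S →ₗ[ℝ] V) (P : V →ₗ[ℝ] S)
    (hP : ∀ (v : V) (σ : S), b (P v) σ = ⟪(v : X), ((E σ : V) : X)⟫) :
    ∃ K, 0 ≤ K ∧ ∀ v : V, ‖P v‖ ≤ K * ‖v‖ := by
  classical
  haveI : CompleteSpace ↥S := FiniteDimensional.complete ℝ ↥S
  set Ec : ↥S →L[ℝ] X := LinearMap.toContinuousLinearMap (V.subtype ∘ₗ E) with hEc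
  set Rz : ↥S →ₗ[ℝ] ↥S :=
    ((InnerProductSpace.toDual ℝ ↥S).symm.toLinearEquiv.toLinearMap.comp
      ((LinearMap.toContinuousLinearMap : (↥S →ₗ[ℝ] ℝ) ≃ₗ[ℝ] (↥S →L[ℝ] ℝ)).toLinearMap.comp b))
    with hRzdef
  have hRz : ∀ s σ : S, ⟪Rz s, σ⟫ = b s σ := by
    intro s σ
    have := InnerProductSpace.toDual_symm_apply (𝕜 := ℝ) (E := ↥S)
      (x := σ) (y := (LinearMap.toContinuousLinearMap : (↥S →ₗ[ℝ] ℝ) ≃ₗ[ℝ] (↥S →L[ℝ] ℝ)) (b s))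
    simpa [hRzdef] using this
  have hRcont : Continuous Rz := Rz.continuous_of_finiteDimensional
  have hRinj : ∀ s : S, Rz s = 0 → s = 0 := by
    intro s hs
    apply hb
    intro σ
    rw [← hRz s σ, hs, inner_zero_left]
  obtain ⟨s₀, hs₀S, hs₀⟩ := Submodule.exists_mem_ne_zero_of_ne_bot hSne
  have hsphne : (Metric.sphere (0 : S) 1).Nonempty := by
    refine ⟨‖(⟨s₀, hs₀S⟩ : S)‖⁻¹ • ⟨s₀, hs₀S⟩, ?_⟩
    have h2 : ‖(⟨s₀, hs₀S⟩ : S)‖ = ‖s₀‖ := rfl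
    have h0' : ‖s₀‖ ≠ 0 := by simpa using hs₀
    simp [norm_smul, h2, inv_mul_cancel₀ h0']
  obtain ⟨σ₀, hσ₀mem, hσ₀min⟩ := (isCompact_sphere (0 : S) 1).exists_isMinOn hsphne
    ((continuous_norm.comp hRcont).continuousOn)
  set m : ℝ := ‖Rz σ₀‖ with hm
  have hmpos : 0 < m := by
    rcases (norm_nonneg (Rz σ₀)).lt_or_eq with h | h
    · exact h
    · exfalso
      have h1 : Rz σ₀ = 0 := norm_eq_zero.1 h.symm
      have h2 : σ₀ = 0 := hRinj _ h1
      have h3 := Metric.mem_sphere.1 hσ₀mem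
      rw [h2] at h3
      simp at h3
  have hlow : ∀ s : S, m * ‖s‖ ≤ ‖Rz s‖ := by
    intro s
    rcases eq_or_ne s 0 with rfl | hs
    · simp
    · have hsn : 0 < ‖s‖ := norm_pos_iff.2 hs
      have hmem : (‖s‖⁻¹ • s) ∈ Metric.sphere (0 : S) 1 := by
        have h1 : ‖(‖s‖⁻¹ • s)‖ = 1 := by
          rw [norm_smul, Real.norm_eq_abs, abs_of_pos (inv_pos.2 hsn),
            inv_mul_cancel₀ hsn.ne']
        simpa using h1
      have h4 : ‖Rz σ₀‖ ≤ ‖Rz (‖s‖⁻¹ • s)‖ := hσ₀min hmem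
      have h2 : ‖Rz (‖s‖⁻¹ • s)‖ = ‖s‖⁻¹ * ‖Rz s‖ := by
        rw [map_smul, norm_smul, Real.norm_eq_abs, abs_of_pos (inv_pos.2 hsn)]
      rw [h2] at h4
      calc m * ‖s‖ ≤ (‖s‖⁻¹ * ‖Rz s‖) * ‖s‖ :=
            mul_le_mul_of_nonneg_right h4 hsn.le
        _ = ‖Rz s‖ * (‖s‖⁻¹ * ‖s‖) := by ring
        _ = ‖Rz s‖ := by rw [inv_mul_cancel₀ hsn.ne', mul_one]
  refine ⟨m⁻¹ * ‖Ec‖, by positivity, ?_⟩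
  intro v
  -- key estimate : ‖Rz (P v)‖ ≤ ‖Ec‖ * ‖v‖
  have hkey : ‖Rz (P v)‖ ≤ ‖Ec‖ * ‖v‖ := by
    rcases eq_or_ne (Rz (P v)) 0 with h | h
    · rw [h, norm_zero]; positivity
    · have hn : 0 < ‖Rz (P v)‖ := norm_pos_iff.2 h
      have hsq : ‖Rz (P v)‖ ^ 2 = b (P v) (Rz (P v)) := by
        rw [← hRz]
        rw [real_inner_self_eq_norm_sq]
      have h5 : b (P v) (Rz (P v)) = ⟪(v : X), ((E (Rz (P v)) : V) : X)⟫ := hP v _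
      have h6 : ((E (Rz (P v)) : V) : X) = Ec (Rz (P v)) := by
        rw [hEc]
        rw [LinearMap.coe_toContinuousLinearMap' (V.subtype ∘ₗ E)]
        rfl
      have h7 : ⟪(v : X), ((E (Rz (P v)) : V) : X)⟫ ≤ ‖(v : X)‖ * (‖Ec‖ * ‖Rz (P v)‖) := by
        rw [h6]
        calc ⟪(v : X), Ec (Rz (P v))⟫ ≤ ‖(v : X)‖ * ‖Ec (Rz (P v))‖ := real_inner_le_norm _ _
          _ ≤ ‖(v : X)‖ * (‖Ec‖ * ‖Rz (P v)‖) :=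
            mul_le_mul_of_nonneg_left (Ec.le_opNorm _) (norm_nonneg _)
      have h8 : ‖Rz (P v)‖ ^ 2 ≤ ‖(v : X)‖ * (‖Ec‖ * ‖Rz (P v)‖) := by
        rw [hsq, h5]; exact h7
      have h9 : ‖(v : X)‖ = ‖v‖ := rfl
      have h10 : ‖Rz (P v)‖ * ‖Rz (P v)‖ ≤ (‖Ec‖ * ‖v‖) * ‖Rz (P v)‖ := by
        calc ‖Rz (P v)‖ * ‖Rz (P v)‖ = ‖Rz (P v)‖ ^ 2 := by ring
          _ ≤ ‖(v : X)‖ * (‖Ec‖ * ‖Rz (P v)‖) := h8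
          _ = (‖Ec‖ * ‖(v : X)‖) * ‖Rz (P v)‖ := by ring
          _ = (‖Ec‖ * ‖v‖) * ‖Rz (P v)‖ := by rw [h9]
      exact le_of_mul_le_mul_right h10 hn
  have h3 : m * ‖P v‖ ≤ ‖Rz (P v)‖ := hlow (P v)
  calc ‖P v‖ = m⁻¹ * (m * ‖P v‖) := by field_simp
    _ ≤ m⁻¹ * ‖Rz (P v)‖ := mul_le_mul_of_nonneg_left h3 (inv_pos.2 hmpos).le
    _ ≤ m⁻¹ * (‖Ec‖ * ‖v‖) := mul_le_mul_of_nonneg_left hkey (inv_pos.2 hmpos).le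
    _ = m⁻¹ * ‖Ec‖ * ‖v‖ := by ring

/-- `P` fixes elements of `S ∩ V`. -/
lemma auxPA {X : Type*} [NormedAddCommGroup X] [InnerProductSpace ℝ X]
    (V S : Submodule ℝ X)
    (b : S →ₗ[ℝ] S →ₗ[ℝ] ℝ) (hb : ∀ s : S, (∀ σ : S, b s σ = 0) → s = 0)
    (E : S →ₗ[ℝ] V) (P : V →ₗ[ℝ] S)
    (hP : ∀ (v : V) (σ : S), b (P v) σ = ⟪(v : X), ((E σ : V) : X)⟫)
    (hcons : ∀ u : S, (u : X) ∈ V → ∀ σ : S, b u σ = ⟪(u : X), ((E σ : V) : X)⟫)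
    (v : V) (hv : (v : X) ∈ S) : ((P v : S) : X) = (v : X) := by
  set u : S := ⟨(v : X), hv⟩ with hu
  have h1 : ∀ σ : S, b (P v - u) σ = 0 := by
    intro σ
    have h2 := hcons u v.2 σ
    have h3 := hP v σ
    have h4 : ((u : S) : X) = (v : X) := rfl
    rw [h4] at h2
    rw [map_sub, LinearMap.sub_apply, h3, h2, sub_self]
  have := hb _ h1
  have h5 : P v = u := sub_eq_zero.1 this
  rw [h5]

lemma auxK {X : Type*} [NormedAddCommGroup X] [InnerProductSpace ℝ X]
    (V S : Submodule ℝ X) [CompleteSpace V] [FiniteDimensional ℝ S] (hSne : S ≠ ⊥)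
    (b : S →ₗ[ℝ] S →ₗ[ℝ] ℝ) (hb : ∀ s : S, (∀ σ : S, b s σ = 0) → s = 0)
    (E : S →ₗ[ℝ] V) (P : V →ₗ[ℝ] S)
    (hP : ∀ (v : V) (σ : S), b (P v) σ = ⟪(v : X), ((E σ : V) : X)⟫)
    (hcons : ∀ u : S, (u : X) ∈ V → ∀ σ : S, b u σ = ⟪(u : X), ((E σ : V) : X)⟫) :
    ∃ K, 0 ≤ K ∧ ∀ v : V,
      ‖(Submodule.orthogonalProjectionOnto S (v : X) : X) - ((P v : S) : X)‖ ≤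
        K * ‖(v : X) - (Submodule.orthogonalProjectionOnto S (v : X) : X)‖ := by
  classical
  obtain ⟨Kp, hKp0, hKp⟩ := auxPbound V S hSne b hb E P hP
  -- the subspace U = S ∩ V inside V
  set U : Submodule ℝ ↥V := S.comap V.subtype with hU
  haveI : FiniteDimensional ℝ ↥U := by
    apply FiniteDimensional.of_injective
      (LinearMap.codRestrict S (V.subtype ∘ₗ U.subtype) (fun u => u.2))
    intro x y hxy
    have h0 : ((x : ↥V) : X) = ((y : ↥V) : X) := congrArg (Subtype.val : ↥S → X) hxy
    exact Subtype.ext (Subtype.ext h0)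
  set W : Submodule ℝ ↥V := Uᗮ with hW
  set W' : Submodule ℝ X := W.map V.subtype with hW'
  have hVclosed : IsClosed (V : Set X) :=
    (completeSpace_coe_iff_isComplete.1 ‹CompleteSpace V›).isClosed
  have hWclosed : IsClosed (W : Set ↥V) := Submodule.isClosed_orthogonal U
  have hW'closed : IsClosed (W' : Set X) := by
    have : (W' : Set X) = Subtype.val '' (W : Set ↥V) := by
      rw [hW']; rfl
    rw [this]
    exact hVclosed.isClosedEmbedding_subtypeVal.isClosedMap _ hWclosed
  have hd : ∀ x ∈ W', x ∈ S → x = (0 : X) := by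
    intro x hx hxS
    obtain ⟨w, hwW, rfl⟩ := Submodule.mem_map.1 hx
    have hwU : w ∈ U := hxS
    have : w = 0 := by
      have h0 := (Submodule.mem_orthogonal U w).1 hwW w hwU
      exact inner_self_eq_zero.1 h0
    rw [this]; rfl
  obtain ⟨c, hc0, hc⟩ := auxLow S W' hSne hW'closed hd
  refine ⟨(1 + Kp) * c⁻¹, by positivity, ?_⟩
  intro v
  set u : ↥U := Submodule.orthogonalProjectionOnto U v with hu
  set uv : ↥V := (u : ↥V) with huv
  set w : ↥V := v - uv with hwdef
  have hwW : w ∈ W := Submodule.sub_starProjection_mem_orthogonal (K := U) v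
  have huvS : (uv : X) ∈ S := u.2
  -- the two pieces for uv vanish
  have h1 : (Submodule.orthogonalProjectionOnto S (uv : X) : X) = (uv : X) :=
    Submodule.starProjection_eq_self_iff (K := S).2 huvS
  have h2 : ((P uv : S) : X) = (uv : X) := auxPA V S b hb E P hP hcons uv huvS
  have hsplit : (v : X) = (uv : X) + (w : X) := by
    rw [hwdef]
    push_cast
    abel
  have hProj : (Submodule.orthogonalProjectionOnto S (v : X) : X) =
      (uv : X) + (Submodule.orthogonalProjectionOnto S (w : X) : X) := by
    rw [hsplit, map_add]
    push_cast
    rw [h1]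
  have hPv : ((P v : S) : X) = (uv : X) + ((P w : S) : X) := by
    have : v = uv + w := by rw [hwdef]; abel
    rw [this, map_add]
    push_cast
    rw [h2]
  -- difference reduces to w
  have hdiff : (Submodule.orthogonalProjectionOnto S (v : X) : X) - ((P v : S) : X) =
      (Submodule.orthogonalProjectionOnto S (w : X) : X) - ((P w : S) : X) := by
    rw [hProj, hPv]; abel
  have hres : (v : X) - (Submodule.orthogonalProjectionOnto S (v : X) : X) =
      (w : X) - (Submodule.orthogonalProjectionOnto S (w : X) : X) := by
    rw [hProj, hsplit]; abel
  -- bound the numerator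
  have hnum : ‖(Submodule.orthogonalProjectionOnto S (w : X) : X) - ((P w : S) : X)‖ ≤ (1 + Kp) * ‖w‖ := by
    calc ‖(Submodule.orthogonalProjectionOnto S (w : X) : X) - ((P w : S) : X)‖
        ≤ ‖(Submodule.orthogonalProjectionOnto S (w : X) : X)‖ + ‖((P w : S) : X)‖ := norm_sub_le _ _
      _ ≤ ‖(w : X)‖ + Kp * ‖w‖ := by
          apply add_le_add
          · calc ‖(Submodule.orthogonalProjectionOnto S (w : X) : X)‖
                = ‖Submodule.orthogonalProjectionOnto S (w : X)‖ := rfl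
              _ ≤ ‖Submodule.orthogonalProjectionOnto S‖ * ‖(w : X)‖ :=
                  (Submodule.orthogonalProjectionOnto S).le_opNorm _
              _ ≤ 1 * ‖(w : X)‖ :=
                  mul_le_mul_of_nonneg_right (Submodule.orthogonalProjectionOnto_norm_le S) (norm_nonneg _)
              _ = ‖(w : X)‖ := one_mul _
          · exact hKp w
      _ = (1 + Kp) * ‖w‖ := by rw [← Submodule.coe_norm]; ring
  -- lower bound on the denominator
  have hwW' : (w : X) ∈ W' := Submodule.mem_map_of_mem hwW
  have hden : c * ‖(w : X)‖ ≤ ‖(w : X) - (Submodule.orthogonalProjectionOnto S (w : X) : X)‖ :=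
    hc _ hwW' _ (Submodule.orthogonalProjectionOnto S (w : X)).2
  rw [hdiff, hres]
  calc ‖(Submodule.orthogonalProjectionOnto S (w : X) : X) - ((P w : S) : X)‖
      ≤ (1 + Kp) * ‖w‖ := hnum
    _ = (1 + Kp) * c⁻¹ * (c * ‖(w : X)‖) := by
        rw [← Submodule.coe_norm]
        field_simp
    _ ≤ (1 + Kp) * c⁻¹ * ‖(w : X) - (Submodule.orthogonalProjectionOnto S (w : X) : X)‖ := by
        apply mul_le_mul_of_nonneg_left hden
        positivity

/-- **Explicit first consistency measure.** Let `P : V → S` be determined by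
`b(P v, σ) = ⟪v, E σ⟫`, assume `b(u, σ) = ⟪u, E σ⟫` for all `u ∈ S ∩ V`, `σ ∈ S`, and
assume `V ⊄ S`. Then the smallest constant `δ_V` with
`‖Π_S v − P v‖ ≤ δ_V ‖v − Π_S v‖` for all `v ∈ V` exists, equals
`sup (b(Π_S v, σ) − ⟪v, E σ⟫)/(‖Π_S v − v‖ ‖b(·,σ)‖_{S'})` over `v` with `Π_S v ≠ v` and
`σ ≠ 0`, and the quasi-optimality constant satisfies `Cqopt = √(1 + δ_V²)`. -/
theorem explicit_first_consistency_measure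
    {X : Type*} [NormedAddCommGroup X] [InnerProductSpace ℝ X] [CompleteSpace X]
    (V S : Submodule ℝ X) [CompleteSpace V] [FiniteDimensional ℝ S]
    (hSne : S ≠ ⊥) (hsum : V ⊔ S = ⊤)
    (b : S →ₗ[ℝ] S →ₗ[ℝ] ℝ) (hb : ∀ s : S, (∀ σ : S, b s σ = 0) → s = 0)
    (E : S →ₗ[ℝ] V)
    (P : V →ₗ[ℝ] S)
    (hP : ∀ (v : V) (σ : S), b (P v) σ = ⟪(v : X), ((E σ : V) : X)⟫)
    (hcons : ∀ u : S, (u : X) ∈ V → ∀ σ : S, b u σ = ⟪(u : X), ((E σ : V) : X)⟫)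
    (hVS : ¬ V ≤ S)
    (δV : ℝ)
    (hδV : δV = sSup {r : ℝ | ∃ (v : V) (σ : S),
        ((Submodule.orthogonalProjectionOnto S (v : X) : X)) ≠ (v : X) ∧ σ ≠ 0 ∧
        r = (b (Submodule.orthogonalProjectionOnto S (v : X)) σ - ⟪(v : X), ((E σ : V) : X)⟫) /
            (‖((Submodule.orthogonalProjectionOnto S (v : X) : X)) - (v : X)‖ *
              sSup {c : ℝ | ∃ s : S, ‖s‖ = 1 ∧ c = b s σ})})
    (Cqopt : ℝ)
    (hCqopt : IsLeast {C : ℝ | ∀ v : V,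
        ‖(v : X) - (P v : X)‖ ≤ C * Metric.infDist (v : X) (S : Set X)} Cqopt) :
    IsLeast {d : ℝ | 0 ≤ d ∧ ∀ v : V,
        ‖((Submodule.orthogonalProjectionOnto S (v : X) : X)) - (P v : X)‖ ≤
          d * ‖(v : X) - (Submodule.orthogonalProjectionOnto S (v : X) : X)‖} δV ∧
      Cqopt = Real.sqrt (1 + δV ^ 2) := by
  classical
  set R : Set ℝ := {r : ℝ | ∃ (v : V) (σ : S),
        ((Submodule.orthogonalProjectionOnto S (v : X) : X)) ≠ (v : X) ∧ σ ≠ 0 ∧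
        r = (b (Submodule.orthogonalProjectionOnto S (v : X)) σ - ⟪(v : X), ((E σ : V) : X)⟫) /
            (‖((Submodule.orthogonalProjectionOnto S (v : X) : X)) - (v : X)‖ *
              sSup {c : ℝ | ∃ s : S, ‖s‖ = 1 ∧ c = b s σ})} with hR
  -- rewrite of the numerator
  have hnum : ∀ (v : V) (σ : S),
      b (Submodule.orthogonalProjectionOnto S (v : X)) σ - ⟪(v : X), ((E σ : V) : X)⟫ =
      b (Submodule.orthogonalProjectionOnto S (v : X) - P v) σ := by
    intro v σ
    rw [map_sub, LinearMap.sub_apply, hP]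
  -- coercion of differences
  have hcoe : ∀ v : V, ((Submodule.orthogonalProjectionOnto S (v : X) - P v : S) : X) =
      (Submodule.orthogonalProjectionOnto S (v : X) : X) - ((P v : S) : X) := by
    intro v; push_cast; ring
  -- generic upper bound on elements of R
  have hub : ∀ C : ℝ, 0 ≤ C →
      (∀ v : V, ‖(Submodule.orthogonalProjectionOnto S (v : X) : X) - ((P v : S) : X)‖ ≤
        C * ‖(v : X) - (Submodule.orthogonalProjectionOnto S (v : X) : X)‖) →
      ∀ r ∈ R, r ≤ C := by
    intro C hC0 hCb r hr
    obtain ⟨v, σ, hne, hσ, rfl⟩ := hr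
    set w : S := Submodule.orthogonalProjectionOnto S (v : X) - P v with hw
    set d1 : ℝ := ‖(Submodule.orthogonalProjectionOnto S (v : X) : X) - (v : X)‖ with hd1
    have hd1pos : 0 < d1 := by
      rw [hd1]
      exact norm_pos_iff.2 (sub_ne_zero.2 hne)
    set nσ : ℝ := sSup {c : ℝ | ∃ s : S, ‖s‖ = 1 ∧ c = b s σ} with hnσ
    have hnσpos : 0 < nσ := auxN_pos b hb σ hσ
    rw [hnum v σ]
    rw [div_le_iff₀ (by positivity)]
    have hwn : ‖w‖ ≤ C * d1 := by
      have h2 := hCb v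
      rw [← hcoe v] at h2
      calc ‖w‖ = ‖((w : S) : X)‖ := rfl
        _ ≤ C * ‖(v : X) - (Submodule.orthogonalProjectionOnto S (v : X) : X)‖ := h2
        _ = C * d1 := by rw [hd1, norm_sub_rev]
    calc b w σ ≤ ‖w‖ * nσ := auxN_le b σ w
      _ ≤ (C * d1) * nσ := mul_le_mul_of_nonneg_right hwn hnσpos.le
      _ = C * (d1 * nσ) := by ring
  obtain ⟨K, hK0, hK⟩ := auxK V S hSne b hb E P hP hcons
  have hbdd : BddAbove R := ⟨K, fun r hr => hub K hK0 hK r hr⟩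
  -- the sigma-star construction
  have hsig : ∀ w : S, w ≠ 0 → ∃ σ : S, σ ≠ 0 ∧ ∀ s : S, b s σ = ⟪w, s⟫ := by
    intro w hw
    obtain ⟨σ, hσ⟩ := aux_flip_surj b hb ((innerSL ℝ w : S →L[ℝ] ℝ) : S →ₗ[ℝ] ℝ)
    have happ : ∀ s : S, b s σ = ⟪w, s⟫ := by
      intro s
      have := congrArg (fun g : Module.Dual ℝ S => g s) hσ
      simpa [LinearMap.flip_apply] using this
    refine ⟨σ, ?_, happ⟩
    intro h0
    have h1 := happ w
    rw [h0, map_zero] at h1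
    exact hw (inner_self_eq_zero.1 h1.symm)
  -- membership of the ratio in R
  have hmem : ∀ v : V, ((Submodule.orthogonalProjectionOnto S (v : X) : X)) ≠ (v : X) →
      (Submodule.orthogonalProjectionOnto S (v : X) - P v : S) ≠ 0 →
      (‖Submodule.orthogonalProjectionOnto S (v : X) - P v‖ /
        ‖(Submodule.orthogonalProjectionOnto S (v : X) : X) - (v : X)‖) ∈ R := by
    intro v hne hwne
    set w : S := Submodule.orthogonalProjectionOnto S (v : X) - P v with hw
    obtain ⟨σ, hσne, hσ⟩ := hsig w hwne
    refine ⟨v, σ, hne, hσne, ?_⟩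
    rw [hnum v σ, ← hw]
    rw [hσ w, auxN_inner b w σ hwne hσ]
    rw [real_inner_self_eq_norm_sq]
    have hwn : ‖w‖ ≠ 0 := norm_ne_zero_iff.2 hwne
    have hd1 : ‖(Submodule.orthogonalProjectionOnto S (v : X) : X) - (v : X)‖ ≠ 0 :=
      norm_ne_zero_iff.2 (sub_ne_zero.2 hne)
    have hwn' : ‖((w : S) : X)‖ ≠ 0 := hwn
    field_simp [hwn']
  -- a point of V outside S
  obtain ⟨x₀, hx₀V, hx₀S⟩ := SetLike.not_le_iff_exists.1 hVS
  clear hVS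
  set v₀ : V := ⟨x₀, hx₀V⟩ with hv₀
  have hne₀ : ((Submodule.orthogonalProjectionOnto S (v₀ : X) : X)) ≠ (v₀ : X) := by
    intro h
    exact hx₀S (Submodule.starProjection_eq_self_iff (K := S).1 h)
  -- δV is nonnegative
  have hδV0 : 0 ≤ δV := by
    rcases eq_or_ne (Submodule.orthogonalProjectionOnto S (v₀ : X) - P v₀ : S) 0 with h | h
    · -- R contains 0
      obtain ⟨y₀, hy₀S, hy₀⟩ := Submodule.exists_mem_ne_zero_of_ne_bot hSne
      have hσ0 : (⟨y₀, hy₀S⟩ : S) ≠ 0 := fun hh => hy₀ (congrArg Subtype.val hh)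
      have h0mem : (0 : ℝ) ∈ R := by
        refine ⟨v₀, ⟨y₀, hy₀S⟩, hne₀, hσ0, ?_⟩
        rw [hnum v₀ _, h, map_zero, LinearMap.zero_apply, zero_div]
      rw [hδV]
      exact le_csSup hbdd h0mem
    · have hmem₀ := hmem v₀ hne₀ h
      have hpos : 0 ≤ ‖Submodule.orthogonalProjectionOnto S (v₀ : X) - P v₀‖ /
          ‖(Submodule.orthogonalProjectionOnto S (v₀ : X) : X) - (v₀ : X)‖ := by positivity
      rw [hδV]
      exact hpos.trans (le_csSup hbdd hmem₀)
  -- the main bound with δV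
  have hmain : ∀ v : V, ‖(Submodule.orthogonalProjectionOnto S (v : X) : X) - ((P v : S) : X)‖ ≤
      δV * ‖(v : X) - (Submodule.orthogonalProjectionOnto S (v : X) : X)‖ := by
    intro v
    rcases eq_or_ne ((Submodule.orthogonalProjectionOnto S (v : X) : X)) ((v : X)) with h | h
    · have hvS : (v : X) ∈ S := Submodule.starProjection_eq_self_iff (K := S).1 h
      have hPv : ((P v : S) : X) = (v : X) := auxPA V S b hb E P hP hcons v hvS
      rw [h, hPv]
      simp
    · rcases eq_or_ne (Submodule.orthogonalProjectionOnto S (v : X) - P v : S) 0 with hw | hw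
      · have h1 : (Submodule.orthogonalProjectionOnto S (v : X) : X) - ((P v : S) : X) = 0 := by
          rw [← hcoe v, hw]; rfl
        rw [h1, norm_zero]
        positivity
      · have hmem' := hmem v h hw
        have hle : ‖Submodule.orthogonalProjectionOnto S (v : X) - P v‖ /
            ‖(Submodule.orthogonalProjectionOnto S (v : X) : X) - (v : X)‖ ≤ δV := by
          rw [hδV]; exact le_csSup hbdd hmem'
        have hd1pos : 0 < ‖(Submodule.orthogonalProjectionOnto S (v : X) : X) - (v : X)‖ :=
          norm_pos_iff.2 (sub_ne_zero.2 h)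
        rw [div_le_iff₀ hd1pos] at hle
        calc ‖(Submodule.orthogonalProjectionOnto S (v : X) : X) - ((P v : S) : X)‖
            = ‖Submodule.orthogonalProjectionOnto S (v : X) - P v‖ := by rw [← hcoe v]; rfl
          _ ≤ δV * ‖(Submodule.orthogonalProjectionOnto S (v : X) : X) - (v : X)‖ := hle
          _ = δV * ‖(v : X) - (Submodule.orthogonalProjectionOnto S (v : X) : X)‖ := by rw [norm_sub_rev]
  -- the IsLeast statement for δV
  have hleast : IsLeast {d : ℝ | 0 ≤ d ∧ ∀ v : V,
      ‖((Submodule.orthogonalProjectionOnto S (v : X) : X)) - (P v : X)‖ ≤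
        d * ‖(v : X) - (Submodule.orthogonalProjectionOnto S (v : X) : X)‖} δV := by
    constructor
    · exact ⟨hδV0, hmain⟩
    · rintro d ⟨hd0, hdb⟩
      rw [hδV]
      exact Real.sSup_le (fun r hr => hub d hd0 hdb r hr) hd0
  refine ⟨hleast, ?_⟩
  -- Pythagoras
  have hperp : ∀ (v : V) (s : S), ‖(v : X) - (s : X)‖ ^ 2 =
      ‖(v : X) - (Submodule.orthogonalProjectionOnto S (v : X) : X)‖ ^ 2 +
      ‖(Submodule.orthogonalProjectionOnto S (v : X) : X) - (s : X)‖ ^ 2 := by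
    intro v s
    have hsplit : (v : X) - (s : X) =
        ((v : X) - (Submodule.orthogonalProjectionOnto S (v : X) : X)) +
        ((Submodule.orthogonalProjectionOnto S (v : X) : X) - (s : X)) := by abel
    have hperp0 : ⟪(v : X) - (Submodule.orthogonalProjectionOnto S (v : X) : X),
        (Submodule.orthogonalProjectionOnto S (v : X) : X) - (s : X)⟫ = 0 := by
      have hmem1 : (v : X) - (Submodule.orthogonalProjectionOnto S (v : X) : X) ∈ Sᗮ :=
        Submodule.sub_starProjection_mem_orthogonal (K := S) (v : X)
      have hmem2 : (Submodule.orthogonalProjectionOnto S (v : X) : X) - (s : X) ∈ S :=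
        S.sub_mem (Submodule.orthogonalProjectionOnto S (v : X)).2 s.2
      have := (Submodule.mem_orthogonal S _).1 hmem1 _ hmem2
      rw [real_inner_comm]
      exact this
    rw [hsplit, norm_add_sq_real, hperp0]
    ring
  -- the distance to S
  have hdistS : ∀ v : V, Metric.infDist (v : X) (S : Set X) =
      ‖(v : X) - (Submodule.orthogonalProjectionOnto S (v : X) : X)‖ := by
    intro v
    apply le_antisymm
    · calc Metric.infDist (v : X) (S : Set X)
          ≤ dist (v : X) (Submodule.orthogonalProjectionOnto S (v : X) : X) :=
            Metric.infDist_le_dist_of_mem (Submodule.orthogonalProjectionOnto S (v : X)).2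
        _ = ‖(v : X) - (Submodule.orthogonalProjectionOnto S (v : X) : X)‖ := dist_eq_norm _ _
    · by_contra hcon
      push_neg at hcon
      obtain ⟨y, hyS, hy⟩ := (Metric.infDist_lt_iff ⟨0, S.zero_mem⟩).1 hcon
      have h1 := hperp v ⟨y, hyS⟩
      have h2 : dist (v : X) y = ‖(v : X) - y‖ := dist_eq_norm _ _
      rw [h2] at hy
      nlinarith [norm_nonneg ((v : X) - y),
        norm_nonneg ((v : X) - (Submodule.orthogonalProjectionOnto S (v : X) : X)),
        norm_nonneg ((Submodule.orthogonalProjectionOnto S (v : X) : X) - y)]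
  -- IsLeast for the quasi-optimality constant at √(1 + δV²)
  have hCleast : IsLeast {C : ℝ | ∀ v : V,
      ‖(v : X) - (P v : X)‖ ≤ C * Metric.infDist (v : X) (S : Set X)}
      (Real.sqrt (1 + δV ^ 2)) := by
    constructor
    · intro v
      rw [hdistS v]
      set a : ℝ := ‖(v : X) - ((P v : S) : X)‖ with ha
      set dd : ℝ := ‖(v : X) - (Submodule.orthogonalProjectionOnto S (v : X) : X)‖ with hdd
      have h1 : a ^ 2 ≤ (1 + δV ^ 2) * dd ^ 2 := by
        have h2 := hperp v (P v)
        have h3 := hmain v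
        have h4 : ‖(Submodule.orthogonalProjectionOnto S (v : X) : X) - ((P v : S) : X)‖ ^ 2 ≤
            (δV * dd) ^ 2 := by
          apply pow_le_pow_left₀ (norm_nonneg _) h3
        rw [← ha, ← hdd] at h2
        nlinarith
      calc a = Real.sqrt (a ^ 2) := (Real.sqrt_sq (norm_nonneg _)).symm
        _ ≤ Real.sqrt ((1 + δV ^ 2) * dd ^ 2) := Real.sqrt_le_sqrt h1
        _ = Real.sqrt (1 + δV ^ 2) * Real.sqrt (dd ^ 2) := by
            rw [Real.sqrt_mul (by positivity)]
        _ = Real.sqrt (1 + δV ^ 2) * dd := by rw [Real.sqrt_sq (norm_nonneg _)]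
    · intro C hC
      -- C ≥ 1
      have hd₀pos : 0 < ‖(v₀ : X) - (Submodule.orthogonalProjectionOnto S (v₀ : X) : X)‖ := by
        rw [norm_pos_iff, sub_ne_zero]
        exact fun h => hne₀ h.symm
      have hC1 : 1 ≤ C := by
        have h1 := hC v₀
        rw [hdistS v₀] at h1
        have h2 := hperp v₀ (P v₀)
        have h3 : ‖(v₀ : X) - (Submodule.orthogonalProjectionOnto S (v₀ : X) : X)‖ ≤
            ‖(v₀ : X) - ((P v₀ : S) : X)‖ := by nlinarith [norm_nonneg ((v₀ : X) - ((P v₀ : S) : X)), norm_nonneg ((Submodule.orthogonalProjectionOnto S (v₀ : X) : X) - ((P v₀ : S) : X))]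
        have h4 : ‖(v₀ : X) - (Submodule.orthogonalProjectionOnto S (v₀ : X) : X)‖ ≤
            C * ‖(v₀ : X) - (Submodule.orthogonalProjectionOnto S (v₀ : X) : X)‖ := le_trans h3 h1
        nlinarith
      have hC0 : 0 ≤ C := by linarith
      -- δV ≤ √(C² - 1)
      have hCsub : 0 ≤ C ^ 2 - 1 := by nlinarith
      have hCd : ∀ v : V, ‖(Submodule.orthogonalProjectionOnto S (v : X) : X) - ((P v : S) : X)‖ ≤
          Real.sqrt (C ^ 2 - 1) * ‖(v : X) - (Submodule.orthogonalProjectionOnto S (v : X) : X)‖ := by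
        intro v
        have h1 := hC v
        rw [hdistS v] at h1
        have h2 := hperp v (P v)
        set a : ℝ := ‖(Submodule.orthogonalProjectionOnto S (v : X) : X) - ((P v : S) : X)‖ with ha
        set dd : ℝ := ‖(v : X) - (Submodule.orthogonalProjectionOnto S (v : X) : X)‖ with hdd
        have h4 : a ^ 2 ≤ (C ^ 2 - 1) * dd ^ 2 := by nlinarith [norm_nonneg ((v : X) - ((P v : S) : X))]
        calc a = Real.sqrt (a ^ 2) := (Real.sqrt_sq (norm_nonneg _)).symm
          _ ≤ Real.sqrt ((C ^ 2 - 1) * dd ^ 2) := Real.sqrt_le_sqrt h4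
          _ = Real.sqrt (C ^ 2 - 1) * Real.sqrt (dd ^ 2) := by
              rw [Real.sqrt_mul hCsub]
          _ = Real.sqrt (C ^ 2 - 1) * dd := by rw [Real.sqrt_sq (norm_nonneg _)]
      have hδle : δV ≤ Real.sqrt (C ^ 2 - 1) := by
        rw [hδV]
        exact Real.sSup_le (fun r hr => hub _ (Real.sqrt_nonneg _) hCd r hr)
          (Real.sqrt_nonneg _)
      have hδsq : δV ^ 2 ≤ C ^ 2 - 1 := by
        have := pow_le_pow_left₀ hδV0 hδle 2
        rwa [Real.sq_sqrt hCsub] at this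
      calc Real.sqrt (1 + δV ^ 2) ≤ Real.sqrt (C ^ 2) := Real.sqrt_le_sqrt (by linarith)
        _ = C := by rw [Real.sqrt_sq hC0]
  exact hCqopt.unique hCleast
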